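/- Under the stated hypotheses, ‖σ − 1‖_{L∞(I_r)} ≤ 1/2. -/

import Mathlib

open MeasureTheory Set

/-- The flattening factor `σ(x) := h'(0)·x / h(x)` (with `σ(0) := 1`), where `m = h'(0)`. -/
noncomputable def sigmaFun (h : ℝ → ℝ) (m : ℝ) (x : ℝ) : ℝ :=
  if x = 0 then 1 else m * x / h x

/-- Under the hypotheses on `h` (three times continuously differentiable on `[0,β]`,
positive inside, vanishing at the endpoints, `h'(0) ≥ 2η0`, `h'(β) ≤ -2η0`, Lipschitz with
constant `L0`, and `∫_0^β |h''|² ≤ M`) and for `0 < r ≤ η0²/(4M)`, one has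
`‖σ - 1‖_{L^∞((0,r))} ≤ 1/2`. -/
theorem stmt_5 (L0 η0 M : ℝ) (hL0 : 1 ≤ L0) (hη0 : 0 < η0) (hη0' : η0 < 1) (hM : 1 < M)
    (β : ℝ) (h h' h'' h''' : ℝ → ℝ) (r : ℝ)
    (hβpos : 0 < β)
    (hd1 : ∀ x ∈ Set.Icc (0:ℝ) β, HasDerivWithinAt h (h' x) (Set.Icc 0 β) x)
    (hd2 : ∀ x ∈ Set.Icc (0:ℝ) β, HasDerivWithinAt h' (h'' x) (Set.Icc 0 β) x)
    (hd3 : ∀ x ∈ Set.Icc (0:ℝ) β, HasDerivWithinAt h'' (h''' x) (Set.Icc 0 β) x)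
    (hc3 : ContinuousOn h''' (Set.Icc 0 β))
    (hpos : ∀ x ∈ Set.Ioo (0:ℝ) β, 0 < h x)
    (h0 : h 0 = 0) (hβ0 : h β = 0)
    (h'0 : 2 * η0 ≤ h' 0) (h'β : h' β ≤ -(2 * η0))
    (hLip : ∀ x1 ∈ Set.Icc (0:ℝ) β, ∀ x2 ∈ Set.Icc (0:ℝ) β, |h x1 - h x2| ≤ L0 * |x1 - x2|)
    (hL2 : (∫ x in (0:ℝ)..β, |h'' x| ^ 2) ≤ M)
    (hr : 0 < r) (hr' : r ≤ η0 ^ 2 / (4 * M)) :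
    ∀ x ∈ Set.Ioo (0:ℝ) r, |sigmaFun h (h' 0) x - 1| ≤ 1 / 2 := by

  have hMpos : (0:ℝ) < M := lt_trans one_pos hM
  have hcont2 : ContinuousOn h'' (Set.Icc 0 β) := fun x hx => (hd3 x hx).continuousWithinAt
  have hcont1 : ContinuousOn h' (Set.Icc 0 β) := fun x hx => (hd2 x hx).continuousWithinAt
  have hcont0 : ContinuousOn h (Set.Icc 0 β) := fun x hx => (hd1 x hx).continuousWithinAt
  -- interval integrability of h'' and h''^2 on [0,t] for t ∈ [0,β]
  have hint2 : ∀ t ∈ Set.Icc (0:ℝ) β, IntervalIntegrable h'' volume 0 t := by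
    intro t ht
    apply ContinuousOn.intervalIntegrable
    apply hcont2.mono
    rw [Set.uIcc_of_le ht.1]
    exact Set.Icc_subset_Icc le_rfl ht.2
  have hintsq : ∀ t ∈ Set.Icc (0:ℝ) β, IntervalIntegrable (fun s => (h'' s)^2) volume 0 t := by
    intro t ht
    apply ContinuousOn.intervalIntegrable
    apply ((hcont2.mono _).pow 2)
    rw [Set.uIcc_of_le ht.1]
    exact Set.Icc_subset_Icc le_rfl ht.2
  have hintabs : ∀ t ∈ Set.Icc (0:ℝ) β, IntervalIntegrable (fun s => |h'' s|) volume 0 t := by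
    intro t ht
    exact (hint2 t ht).abs
  -- FTC for h'' : ∫₀ᵗ h'' = h' t - h' 0
  have key2 : ∀ t ∈ Set.Icc (0:ℝ) β, ∫ s in (0:ℝ)..t, h'' s = h' t - h' 0 := by
    intro t ht
    apply intervalIntegral.integral_eq_sub_of_hasDeriv_right_of_le ht.1
    · exact hcont1.mono (Set.Icc_subset_Icc le_rfl ht.2)
    · intro x hx
      have hxβ : x < β := lt_of_lt_of_le hx.2 ht.2
      have hxm : x ∈ Set.Icc (0:ℝ) β := ⟨le_of_lt hx.1, le_of_lt hxβ⟩
      exact ((hd2 x hxm).hasDerivAt (Icc_mem_nhds hx.1 hxβ)).hasDerivWithinAt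
    · exact hint2 t ht
  -- ∫₀ᵗ (h'')² ≤ M
  have hsqM : ∀ t ∈ Set.Icc (0:ℝ) β, (∫ s in (0:ℝ)..t, (h'' s)^2) ≤ M := by
    intro t ht
    have hsplit : (∫ s in (0:ℝ)..t, (h'' s)^2) + (∫ s in t..β, (h'' s)^2)
        = ∫ s in (0:ℝ)..β, (h'' s)^2 := by
      apply intervalIntegral.integral_add_adjacent_intervals (hintsq t ht)
      apply ContinuousOn.intervalIntegrable
      apply ((hcont2.mono _).pow 2)
      rw [Set.uIcc_of_le ht.2]
      exact Set.Icc_subset_Icc ht.1 le_rfl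
    have hnn : (0:ℝ) ≤ ∫ s in t..β, (h'' s)^2 :=
      intervalIntegral.integral_nonneg ht.2 (fun s _ => sq_nonneg _)
    have hL2' : (∫ s in (0:ℝ)..β, (h'' s)^2) ≤ M := by
      have : (∫ x in (0:ℝ)..β, |h'' x| ^ 2) = ∫ s in (0:ℝ)..β, (h'' s)^2 := by
        simp [sq_abs]
      linarith [hL2, this.symm.le, this.le]
    linarith
  -- bound ∫₀ᵗ |h''| ≤ (M/η0) t + η0/4
  have habs : ∀ t ∈ Set.Icc (0:ℝ) β, (∫ s in (0:ℝ)..t, |h'' s|) ≤ M / η0 * t + η0 / 4 := by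
    intro t ht
    have hmono : (∫ s in (0:ℝ)..t, |h'' s|)
        ≤ ∫ s in (0:ℝ)..t, (M / η0 + η0 / (4 * M) * (h'' s)^2) := by
      apply intervalIntegral.integral_mono_on ht.1 (hintabs t ht)
      · exact (intervalIntegrable_const).add ((hintsq t ht).const_mul _)
      · intro s _
        set u := |h'' s| with hu
        have h3 : u^2 = (h'' s)^2 := sq_abs _
        have hkey : 4*M*η0*u ≤ 4*M^2 + η0^2*u^2 := by
          nlinarith [sq_nonneg (2*M - η0*u)]
        have hpos4 : (0:ℝ) < 4*M*η0 := by positivity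
        have heq : M / η0 + η0 / (4 * M) * (h'' s)^2 - u
            = (4*M^2 + η0^2*u^2 - 4*M*η0*u) / (4*M*η0) := by
          rw [← h3]; field_simp
        have hnn : 0 ≤ (4*M^2 + η0^2*u^2 - 4*M*η0*u) / (4*M*η0) :=
          div_nonneg (by linarith) (le_of_lt hpos4)
        linarith [heq ▸ hnn]
    have heval : (∫ s in (0:ℝ)..t, (M / η0 + η0 / (4 * M) * (h'' s)^2))
        = M / η0 * t + η0 / (4 * M) * ∫ s in (0:ℝ)..t, (h'' s)^2 := by
      rw [intervalIntegral.integral_add intervalIntegrable_const ((hintsq t ht).const_mul _),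
        intervalIntegral.integral_const, intervalIntegral.integral_const_mul]
      simp [smul_eq_mul]; ring
    have hc : η0 / (4 * M) * (∫ s in (0:ℝ)..t, (h'' s)^2) ≤ η0 / (4 * M) * M := by
      apply mul_le_mul_of_nonneg_left (hsqM t ht)
      positivity
    have : η0 / (4 * M) * M = η0 / 4 := by field_simp
    rw [heval] at hmono
    linarith
  -- bound on |h' t - h' 0|
  have hd'bd : ∀ t ∈ Set.Icc (0:ℝ) β, |h' t - h' 0| ≤ M / η0 * t + η0 / 4 := by
    intro t ht
    rw [← key2 t ht]
    calc |∫ s in (0:ℝ)..t, h'' s| ≤ ∫ s in (0:ℝ)..t, |h'' s| :=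
          intervalIntegral.abs_integral_le_integral_abs ht.1
      _ ≤ M / η0 * t + η0 / 4 := habs t ht
  -- lower bound on β, hence r < β
  have hβlb : 15 * η0 ^ 2 / (4 * M) ≤ β := by
    have hb := hd'bd β ⟨le_of_lt hβpos, le_rfl⟩
    have h4 : 4 * η0 ≤ |h' β - h' 0| := by
      rw [abs_sub_comm, abs_of_nonneg (by linarith)]
      linarith
    rw [div_le_iff₀ (by linarith : (0:ℝ) < 4 * M)]
    have h5 : 15 * η0 / 4 ≤ M / η0 * β := by linarith [le_trans h4 hb]
    have h6 : M / η0 * β * η0 = M * β := by field_simp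
    nlinarith [mul_le_mul_of_nonneg_right h5 (le_of_lt hη0)]
  have hrβ : r < β := by
    have h1 : η0 ^ 2 / (4 * M) < 15 * η0 ^ 2 / (4 * M) := by
      rw [div_lt_div_iff₀ (by linarith) (by linarith)]
      nlinarith [pow_pos hη0 2]
    linarith
  intro x hx
  obtain ⟨hx0, hxr⟩ := hx
  have hxβ : x < β := lt_trans hxr hrβ
  have hxm : x ∈ Set.Icc (0:ℝ) β := ⟨le_of_lt hx0, le_of_lt hxβ⟩
  -- bound C ≤ η0/2 on [0,x]
  have hCx : M / η0 * x + η0 / 4 ≤ η0 / 2 := by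
    have hxr' : x ≤ η0 ^ 2 / (4 * M) := le_trans (le_of_lt hxr) hr'
    have : M / η0 * x ≤ M / η0 * (η0 ^ 2 / (4 * M)) := by
      apply mul_le_mul_of_nonneg_left hxr'
      positivity
    have heq : M / η0 * (η0 ^ 2 / (4 * M)) = η0 / 4 := by field_simp
    linarith [heq ▸ this]
  have hd'x : ∀ t ∈ Set.Icc (0:ℝ) x, |h' t - h' 0| ≤ η0 / 2 := by
    intro t ht
    have htm : t ∈ Set.Icc (0:ℝ) β := ⟨ht.1, le_trans ht.2 (le_of_lt hxβ)⟩
    have := hd'bd t htm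
    have hmt : M / η0 * t ≤ M / η0 * x := by
      apply mul_le_mul_of_nonneg_left ht.2; positivity
    linarith
  -- FTC for h on [0,x]
  have hint1 : IntervalIntegrable h' volume 0 x := by
    apply ContinuousOn.intervalIntegrable
    apply hcont1.mono
    rw [Set.uIcc_of_le (le_of_lt hx0)]
    exact Set.Icc_subset_Icc le_rfl (le_of_lt hxβ)
  have key1 : ∫ t in (0:ℝ)..x, h' t = h x := by
    have : ∫ t in (0:ℝ)..x, h' t = h x - h 0 := by
      apply intervalIntegral.integral_eq_sub_of_hasDeriv_right_of_le (le_of_lt hx0)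
      · exact hcont0.mono (Set.Icc_subset_Icc le_rfl (le_of_lt hxβ))
      · intro y hy
        have hyβ : y < β := lt_trans hy.2 hxβ
        have hym : y ∈ Set.Icc (0:ℝ) β := ⟨le_of_lt hy.1, le_of_lt hyβ⟩
        exact ((hd1 y hym).hasDerivAt (Icc_mem_nhds hy.1 hyβ)).hasDerivWithinAt
      · exact hint1
    rw [this, h0, sub_zero]
  -- |h x - h' 0 * x| ≤ (η0/2) x
  have hhx : |h x - h' 0 * x| ≤ η0 / 2 * x := by
    have hdiff : h x - h' 0 * x = ∫ t in (0:ℝ)..x, (h' t - h' 0) := by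
      rw [intervalIntegral.integral_sub hint1 intervalIntegrable_const,
        intervalIntegral.integral_const, key1]
      simp [smul_eq_mul]
      ring
    rw [hdiff]
    calc |∫ t in (0:ℝ)..x, (h' t - h' 0)| ≤ ∫ t in (0:ℝ)..x, |h' t - h' 0| :=
          intervalIntegral.abs_integral_le_integral_abs (le_of_lt hx0)
      _ ≤ ∫ t in (0:ℝ)..x, (η0 / 2 : ℝ) := by
          apply intervalIntegral.integral_mono_on (le_of_lt hx0)
            (hint1.sub intervalIntegrable_const).abs intervalIntegrable_const
          exact hd'x
      _ = η0 / 2 * x := by simp [smul_eq_mul]; ring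
  have hhab : |h x - h' 0 * x| ≤ η0 / 2 * x := hhx
  have hhlb : 3 / 2 * η0 * x ≤ h x := by
    have := abs_le.1 hhx
    nlinarith
  have hhpos : 0 < h x := by nlinarith
  -- conclude
  have hxne : x ≠ 0 := ne_of_gt hx0
  rw [sigmaFun, if_neg hxne]
  have hdiv : h' 0 * x / h x - 1 = (h' 0 * x - h x) / h x := by
    field_simp
  rw [hdiv, abs_div, abs_of_pos hhpos, div_le_iff₀ hhpos]
  have : |h' 0 * x - h x| = |h x - h' 0 * x| := abs_sub_comm _ _
  rw [this]
  nlinarith
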